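/- Let G be a finite directed graph satisfying condition SC with parameter F (|F| ≤ f), and let S be the unique source component of G−F. Then for every pair of vertices u ∈ S ∪ N(F→S) and v ∈ S, there exists a path from u to v in G none of whose internal vertices lie in F, where N(F→S) denotes the set of vertices in F having an edge into S. -/

import Mathlib

open Set

variable {V : Type*}

/-- A (directed) path: nonempty list of distinct vertices with consecutive edges. -/
def DiPath (E : V → V → Prop) (p : List V) : Prop :=
  p ≠ [] ∧ p.Nodup ∧ p.Chain' E

/-- A path excludes `F` if none of its internal vertices lies in `F`. -/
def Excludes (F : Set V) (p : List V) : Prop :=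
  ∀ x ∈ p.tail.dropLast, x ∉ F

/-- A path from (a vertex of) `A` to `v`. -/
def PathFromTo (E : V → V → Prop) (A : Set V) (v : V) (p : List V) : Prop :=
  DiPath E p ∧ (∃ a ∈ A, p.head? = some a) ∧ p.getLast? = some v

/-- There exist `n` pairwise internally-disjoint `A`-`v` paths excluding `F`
(sharing only the terminal `v`). -/
def DisjPaths (E : V → V → Prop) (F A : Set V) (v : V) (n : ℕ) : Prop :=
  ∃ P : Fin n → List V,
    (∀ i, PathFromTo E A v (P i) ∧ Excludes F (P i)) ∧
    (∀ i j, i ≠ j → ∀ x, x ∈ P i → x ∈ P j → x = v)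

/-- `A` (f+1)-propagates to every vertex of `B` avoiding `F`. -/
def Propagates (E : V → V → Prop) (f : ℕ) (F A B : Set V) : Prop :=
  ∀ v ∈ B, DisjPaths E F A v (f + 1)

/-- Condition SC with parameter `F`. -/
def CondSC (E : V → V → Prop) (f : ℕ) (F : Set V) : Prop :=
  ∀ A B : Set V, A ∪ B = Set.univ → A ∩ B = ∅ →
    (A \ F).Nonempty → (B \ F).Nonempty →
    Propagates E f F A (B \ F) ∨ Propagates E f F B (A \ F)

/-- Reachability within the vertex set `W`. -/
def ReachIn (E : V → V → Prop) (W : Set V) : V → V → Prop :=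
  Relation.ReflTransGen (fun a b => a ∈ W ∧ b ∈ W ∧ E a b)

/-- `S` is a (maximal) strongly connected component of the induced subgraph on `W`. -/
def IsSCCIn (E : V → V → Prop) (W S : Set V) : Prop :=
  S.Nonempty ∧ S ⊆ W ∧ (∀ u ∈ S, ∀ v ∈ S, ReachIn E W u v) ∧
  ∀ T, S ⊆ T → T ⊆ W → (∀ u ∈ T, ∀ v ∈ T, ReachIn E W u v) → T = S

/-- `S` is a source component of `G − F`: an SCC of the induced subgraph on `V − F`
receiving no edge from a vertex of `V − F` outside `S`. -/
def IsSourceComponent (E : V → V → Prop) (F S : Set V) : Prop :=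
  IsSCCIn E (Set.univ \ F) S ∧ ∀ u, u ∉ F → u ∉ S → ∀ s ∈ S, ¬ E u s

/-- In-neighborhood of `T` contained in `B`. -/
def inNbr (E : V → V → Prop) (B T : Set V) : Set V :=
  {u ∈ B | ∃ v ∈ T, E u v}

/-- `N(F→S)`: vertices of `F` with an edge into `S`. -/
def NFS (E : V → V → Prop) (F S : Set V) : Set V :=
  {w ∈ F | ∃ s ∈ S, E w s}

/-- Edge relation of the subgraph induced on `U`. -/
def inducedE (E : V → V → Prop) (U : Set V) : V → V → Prop :=
  fun a b => a ∈ U ∧ b ∈ U ∧ E a b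

/-- Condition NC with parameter `F`. -/
def CondNC (E : V → V → Prop) (f : ℕ) (F : Set V) : Prop :=
  ∀ L C R : Set V, L ∪ C ∪ R = Set.univ →
    L ∩ C = ∅ → L ∩ R = ∅ → C ∩ R = ∅ →
    (L \ F).Nonempty → (R \ F).Nonempty →
    f < (inNbr E (R ∪ C) (L \ F)).ncard ∨ f < (inNbr E (L ∪ C) (R \ F)).ncard


private lemma extend_path (E : V → V → Prop) (W : Set V) {p : List V} {a b c : V}
    (hp : p ≠ [] ∧ p.Nodup ∧ p.Chain' E ∧ p.head? = some a ∧ p.getLast? = some b ∧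
      ∀ x ∈ p, x ∈ W)
    (hc : c ∈ W) (hE : E b c) :
    ∃ q : List V, q ≠ [] ∧ q.Nodup ∧ q.Chain' E ∧ q.head? = some a ∧ q.getLast? = some c ∧
      ∀ x ∈ q, x ∈ W := by
  classical
  obtain ⟨hne, hnd, hch, hhd, hlast, hW⟩ := hp
  by_cases hcp : c ∈ p
  · obtain ⟨s, t, rfl⟩ := List.append_of_mem hcp
    refine ⟨s ++ [c], by simp, ?_, ?_, ?_, by simp, ?_⟩
    · exact hnd.sublist (List.Sublist.append_left (by simp) s)
    · exact hch.prefix ⟨t, by simp⟩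
    · cases s with
      | nil => simpa using hhd
      | cons x s' => simpa using hhd
    · intro x hx
      rcases List.mem_append.1 hx with h | h
      · exact hW x (List.mem_append.2 (Or.inl h))
      · simp at h; subst h; exact hc
  · refine ⟨p ++ [c], by simp, ?_, ?_, ?_, by simp, ?_⟩
    · exact List.nodup_append.2 ⟨hnd, List.nodup_singleton c, by simpa using fun (a : V) (ha : a ∈ p) (h : a = c) => hcp (h ▸ ha)⟩
    · refine List.isChain_append.2 ⟨hch, List.isChain_singleton c, ?_⟩
      intro x hx y hy
      simp at hy; subst hy
      rw [hlast] at hx; simp at hx; subst hx; exact hE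
    · rw [List.head?_append_of_ne_nil _ hne]; exact hhd
    · intro x hx
      rcases List.mem_append.1 hx with h | h
      · exact hW x h
      · simp at h; subst h; exact hc

private lemma reach_path (E : V → V → Prop) (W : Set V) {a b : V}
    (ha : a ∈ W) (h : ReachIn E W a b) :
    ∃ p : List V, p ≠ [] ∧ p.Nodup ∧ p.Chain' E ∧ p.head? = some a ∧ p.getLast? = some b ∧
      ∀ x ∈ p, x ∈ W := by
  induction h with
  | refl => exact ⟨[a], by simp, by simp, List.isChain_singleton a, by simp, by simp, by simpa⟩
  | tail _ hbc ih =>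
    obtain ⟨_, hcW, hE⟩ := hbc
    obtain ⟨p, hp⟩ := ih
    exact extend_path E W hp hcW hE

/-- From every `u ∈ S ∪ N(F→S)` there is a path to every `v ∈ S` excluding `F`. -/
theorem paths_into_source_component [Fintype V] (E : V → V → Prop) (f : ℕ) (F S : Set V)
    (hF : F.ncard ≤ f) (hSC : CondSC E f F)
    (hS : IsSourceComponent E F S)
    (hUniq : ∀ S', IsSourceComponent E F S' → S' = S) :
    ∀ u ∈ S ∪ NFS E F S, ∀ v ∈ S,
      ∃ p : List V, DiPath E p ∧ p.head? = some u ∧ p.getLast? = some v ∧ Excludes F p := by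
  classical
  obtain ⟨⟨hSne, hSsub, hreach, _⟩, _⟩ := hS
  intro u hu v hv
  rcases hu with hu | hu
  · obtain ⟨p, hne, hnd, hch, hhd, hlast, hW⟩ :=
      reach_path E (Set.univ \ F) (hSsub hu) (hreach u hu v hv)
    refine ⟨p, ⟨hne, hnd, hch⟩, hhd, hlast, ?_⟩
    intro x hx
    have : x ∈ p := (p.tail.dropLast_sublist.trans p.tail_sublist).mem hx
    exact (hW x this).2
  · obtain ⟨huF, s, hsS, hEus⟩ := hu
    obtain ⟨p, hne, hnd, hch, hhd, hlast, hW⟩ :=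
      reach_path E (Set.univ \ F) (hSsub hsS) (hreach s hsS v hv)
    have hup : u ∉ p := fun h => (hW u h).2 huF
    refine ⟨u :: p, ⟨by simp, List.nodup_cons.2 ⟨hup, hnd⟩, ?_⟩, by simp, ?_, ?_⟩
    · refine List.isChain_cons.2 ⟨?_, hch⟩
      intro y hy; rw [hhd] at hy; simp at hy; subst hy; exact hEus
    · cases p with
      | nil => exact absurd rfl hne
      | cons x t => simpa using hlast
    · intro x hx
      simp only [List.tail_cons] at hx
      have : x ∈ p := p.dropLast_sublist.mem hx
      exact (hW x this).2
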